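/- In a pseudo-tensor category 𝒟 over k, if an object X has dim X ≠ 0 (where dim X = ev_X ∘ σ_{X,X⁰} ∘ co_X ∈ End(𝟙) ≅ k), then X is strongly faithful; explicitly, setting f := (1/dim X)·σ_{X,X⁰} ∘ co_X : 𝟙 → X⁰ ⊗ X and h := (f ⊗ f) ∘ ev_X − id_{X⁰⊗X} ⊗ f : X⁰⊗X → X⁰⊗X⊗X⁰⊗X, the sequence γ_X is split exact. -/

import Mathlib

open CategoryTheory CategoryTheory.Limits CategoryTheory.MonoidalCategory

universe v u

/-- A morphism `f` is split if there is `g` with `f ∘ g ∘ f = f`. -/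
def IsSplit {C : Type u} [Category.{v} C] {X Y : C} (f : X ⟶ Y) : Prop :=
  ∃ g : Y ⟶ X, f ≫ g ≫ f = f

/-- The sequence `X₂ ⟶ X₁ ⟶ X₀ ⟶ 0` is exact, i.e. `q` is a cokernel of `p`. -/
def IsCokernelSeq {C : Type u} [Category.{v} C] [Preadditive C] {X₂ X₁ X₀ : C}
    (p : X₂ ⟶ X₁) (q : X₁ ⟶ X₀) : Prop :=
  p ≫ q = 0 ∧ ∀ ⦃A : C⦄ (h : X₁ ⟶ A), p ≫ h = 0 → ∃! t : X₀ ⟶ A, q ≫ t = h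

/-- The sequence `0 ⟶ X₀ ⟶ X₁ ⟶ X₂` is exact, i.e. `i` is a kernel of `p`. -/
def IsKernelSeq {C : Type u} [Category.{v} C] [Preadditive C] {X₀ X₁ X₂ : C}
    (i : X₀ ⟶ X₁) (p : X₁ ⟶ X₂) : Prop :=
  i ≫ p = 0 ∧ ∀ ⦃A : C⦄ (h : A ⟶ X₁), h ≫ p = 0 → ∃! t : A ⟶ X₀, t ≫ i = h

/-- The morphism `ℰ_X = ev_X ⊗ id_{X⁰⊗X} − id_{X⁰⊗X} ⊗ ev_X`. -/
def calE {C : Type u} [Category.{v} C] [Preadditive C] [MonoidalCategory C]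
    (X Xd : C) [ExactPairing X Xd] : (Xd ⊗ X) ⊗ (Xd ⊗ X) ⟶ Xd ⊗ X :=
  (ε_ X Xd ▷ (Xd ⊗ X)) ≫ (λ_ (Xd ⊗ X)).hom -
    ((Xd ⊗ X) ◁ ε_ X Xd) ≫ (ρ_ (Xd ⊗ X)).hom

/-- `X` (with chosen dual `Xd`) is strongly faithful: `ev_X` is the cokernel of `ℰ_X`. -/
def StronglyFaithful {C : Type u} [Category.{v} C] [Preadditive C]
    [MonoidalCategory C] (X Xd : C) [ExactPairing X Xd] : Prop :=
  IsCokernelSeq (calE X Xd) (ε_ X Xd)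

section Aux

set_option linter.unusedSectionVars false

variable {C : Type u} [Category.{v} C] [Preadditive C] [MonoidalCategory C]
  [MonoidalPreadditive C] (X Xd : C) [ExactPairing X Xd]

lemma aux_t1 (f : 𝟙_ C ⟶ Xd ⊗ X) (hf : f ≫ ε_ X Xd = 𝟙 (𝟙_ C)) :
    (ε_ X Xd ≫ (λ_ (𝟙_ C)).inv ≫ (f ⊗ₘ f)) ≫ (ε_ X Xd ▷ (Xd ⊗ X)) ≫ (λ_ (Xd ⊗ X)).hom =
      ε_ X Xd ≫ f := by
  rw [MonoidalCategory.tensorHom_def]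
  slice_lhs 4 5 => rw [whisker_exchange]
  slice_lhs 3 4 => rw [← comp_whiskerRight, hf]
  simp

lemma aux_t2 (f : 𝟙_ C ⟶ Xd ⊗ X) (hf : f ≫ ε_ X Xd = 𝟙 (𝟙_ C)) :
    (ε_ X Xd ≫ (λ_ (𝟙_ C)).inv ≫ (f ⊗ₘ f)) ≫ ((Xd ⊗ X) ◁ ε_ X Xd) ≫ (ρ_ (Xd ⊗ X)).hom =
      ε_ X Xd ≫ f := by
  rw [MonoidalCategory.tensorHom_def]
  slice_lhs 4 5 => rw [← MonoidalCategory.whiskerLeft_comp, hf]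
  simp
  rw [MonoidalCategory.unitors_inv_equal]
  simp

lemma aux_t3 (f : 𝟙_ C ⟶ Xd ⊗ X) :
    ((ρ_ (Xd ⊗ X)).inv ≫ ((Xd ⊗ X) ◁ f)) ≫ (ε_ X Xd ▷ (Xd ⊗ X)) ≫ (λ_ (Xd ⊗ X)).hom =
      ε_ X Xd ≫ f := by
  slice_lhs 2 3 => rw [whisker_exchange]
  simp
  rw [MonoidalCategory.unitors_equal]
  simp

lemma aux_t4 (f : 𝟙_ C ⟶ Xd ⊗ X) (hf : f ≫ ε_ X Xd = 𝟙 (𝟙_ C)) :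
    ((ρ_ (Xd ⊗ X)).inv ≫ ((Xd ⊗ X) ◁ f)) ≫ ((Xd ⊗ X) ◁ ε_ X Xd) ≫ (ρ_ (Xd ⊗ X)).hom =
      𝟙 (Xd ⊗ X) := by
  slice_lhs 2 3 => rw [← MonoidalCategory.whiskerLeft_comp, hf]
  simp

lemma aux_key (f : 𝟙_ C ⟶ Xd ⊗ X) (hf : f ≫ ε_ X Xd = 𝟙 (𝟙_ C)) :
    (ε_ X Xd ≫ (λ_ (𝟙_ C)).inv ≫ (f ⊗ₘ f) - (ρ_ (Xd ⊗ X)).inv ≫ ((Xd ⊗ X) ◁ f)) ≫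
      calE X Xd + ε_ X Xd ≫ f = 𝟙 (Xd ⊗ X) := by
  rw [calE, Preadditive.sub_comp, Preadditive.comp_sub, Preadditive.comp_sub]
  rw [show (ε_ X Xd ≫ (λ_ (𝟙_ C)).inv ≫ (f ⊗ₘ f)) ≫ (ε_ X Xd ▷ (Xd ⊗ X)) ≫ (λ_ (Xd ⊗ X)).hom
      = ε_ X Xd ≫ f from aux_t1 X Xd f hf,
    show (ε_ X Xd ≫ (λ_ (𝟙_ C)).inv ≫ (f ⊗ₘ f)) ≫ ((Xd ⊗ X) ◁ ε_ X Xd) ≫ (ρ_ (Xd ⊗ X)).hom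
      = ε_ X Xd ≫ f from aux_t2 X Xd f hf,
    show ((ρ_ (Xd ⊗ X)).inv ≫ ((Xd ⊗ X) ◁ f)) ≫ (ε_ X Xd ▷ (Xd ⊗ X)) ≫ (λ_ (Xd ⊗ X)).hom
      = ε_ X Xd ≫ f from aux_t3 X Xd f,
    show ((ρ_ (Xd ⊗ X)).inv ≫ ((Xd ⊗ X) ◁ f)) ≫ ((Xd ⊗ X) ◁ ε_ X Xd) ≫ (ρ_ (Xd ⊗ X)).hom
      = 𝟙 (Xd ⊗ X) from aux_t4 X Xd f hf]
  abel

lemma aux_calE_comp_ev : calE X Xd ≫ ε_ X Xd = 0 := by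
  rw [calE, Preadditive.sub_comp, Category.assoc, Category.assoc]
  rw [show (λ_ (Xd ⊗ X)).hom ≫ ε_ X Xd = (𝟙_ C ◁ ε_ X Xd) ≫ (λ_ (𝟙_ C)).hom by simp,
    show (ρ_ (Xd ⊗ X)).hom ≫ ε_ X Xd = (ε_ X Xd ▷ 𝟙_ C) ≫ (ρ_ (𝟙_ C)).hom by simp]
  rw [← Category.assoc, ← Category.assoc, ← whisker_exchange,
    MonoidalCategory.unitors_equal]
  simp

end Aux

/-- If `dim X = ev_X ∘ σ ∘ co_X` equals `d • 𝟙` with `d ≠ 0` in `k`,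
then `X` is strongly faithful; explicitly, with `f := d⁻¹ • (σ ∘ co_X)` and
`h := (f ⊗ₘ f) ∘ ev_X − id ⊗ f`, the sequence `γ_X` is split exact. -/
theorem stmt14 {k : Type*} [Field k] {C : Type u} [Category.{v} C] [Preadditive C]
    [Linear k C] [MonoidalCategory C] [SymmetricCategory C] [MonoidalPreadditive C]
    [MonoidalLinear k C] [RigidCategory C] [IsIdempotentComplete C]
    (hEnd : Function.Bijective fun a : k => a • (𝟙 (𝟙_ C)))
    (X Xd : C) [ExactPairing X Xd] (d : k)
    (hd : η_ X Xd ≫ (β_ X Xd).hom ≫ ε_ X Xd = d • 𝟙 (𝟙_ C)) (hd0 : d ≠ 0) :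
    let f : 𝟙_ C ⟶ Xd ⊗ X := d⁻¹ • (η_ X Xd ≫ (β_ X Xd).hom)
    let h : Xd ⊗ X ⟶ (Xd ⊗ X) ⊗ (Xd ⊗ X) :=
      ε_ X Xd ≫ (λ_ (𝟙_ C)).inv ≫ (f ⊗ₘ f) - (ρ_ (Xd ⊗ X)).inv ≫ ((Xd ⊗ X) ◁ f)
    f ≫ ε_ X Xd = 𝟙 (𝟙_ C) ∧
      h ≫ calE X Xd + ε_ X Xd ≫ f = 𝟙 (Xd ⊗ X) ∧
      StronglyFaithful X Xd := by
  intro f h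
  have hf : f ≫ ε_ X Xd = 𝟙 (𝟙_ C) := by
    simp only [f, Linear.smul_comp, Category.assoc, hd, smul_smul,
      inv_mul_cancel₀ hd0, one_smul]
  have hkey : h ≫ calE X Xd + ε_ X Xd ≫ f = 𝟙 (Xd ⊗ X) := aux_key X Xd f hf
  refine ⟨hf, hkey, aux_calE_comp_ev X Xd, ?_⟩
  intro A g hg
  refine ⟨f ≫ g, ?_, ?_⟩
  · have := congrArg (· ≫ g) hkey
    simpa [Preadditive.add_comp, Category.assoc, hg] using this
  · intro t ht
    rw [← ht, ← Category.assoc, hf, Category.id_comp]
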